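/- Let A and B be nondeterministic parity tree automata, t an input tree, and ρ_A, ρ_B accepting runs of A and B on t where ρ_A is guided by ρ_B via a guiding function g. If u ∈ {0,1}* and v ∈ {0,1}+ satisfy ρ_A(u) = ρ_A(u·v) and ρ_B(u) = ρ_B(u·v), and the greatest priority of ρ_B on the path segment from u to u·v is even, then the greatest priority of ρ_A on that segment is also even. -/

import Mathlib

/-- A sequence of priorities is parity accepting if its limsup is even. -/
def ParityAccepting (c : ℕ → ℕ) : Prop :=
  ∃ p, Even p ∧ (∃ᶠ n in Filter.atTop, c n = p) ∧ (∀ᶠ n in Filter.atTop, c n ≤ p)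

/-- A nondeterministic parity tree automaton over the alphabet `A`: transitions are tuples
`(q, a, q₀, q₁)` and `Ω` assigns a pair of priorities to the two directions of each
transition. -/
structure NPA (A : Type) where
  Q : Type
  qinit : Q
  Δ : Set (Q × A × Q × Q)
  Ω : Q × A × Q × Q → ℕ × ℕ

namespace NPA

variable {A : Type}

/-- Tree positions are words over {0,1}, modelled as `List Bool`; the children of `u` are
`u ++ [false]` and `u ++ [true]`. -/
abbrev Pos := List Bool

/-- `ρ : Pos → Δ` is a run of the automaton `M` on the input tree `t`. -/
def IsRun (M : NPA A) (t : Pos → A) (ρ : Pos → M.Q × A × M.Q × M.Q) : Prop :=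
  (∀ u, ρ u ∈ M.Δ) ∧
  (∀ u, (ρ u).2.1 = t u) ∧
  (ρ []).1 = M.qinit ∧
  (∀ u (b : Bool), (ρ (u ++ [b])).1 = if b then (ρ u).2.2.2 else (ρ u).2.2.1)

/-- The prefix of length `m` of a branch `β`. -/
def pre (β : ℕ → Bool) (m : ℕ) : Pos := (List.range m).map β

/-- The priority seen at depth `m` along the branch `β` in the run `ρ`. -/
def branchPrio (M : NPA A) (ρ : Pos → M.Q × A × M.Q × M.Q) (β : ℕ → Bool) (m : ℕ) : ℕ :=
  if β m then (M.Ω (ρ (pre β m))).2 else (M.Ω (ρ (pre β m))).1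

/-- A run is accepting if the priority sequence of every branch is parity accepting. -/
def AcceptingRun (M : NPA A) (ρ : Pos → M.Q × A × M.Q × M.Q) : Prop :=
  ∀ β : ℕ → Bool, ParityAccepting (branchPrio M ρ β)

/-- `g` is a guiding function from `B` to `M`: `g (p, (q, a, q₀, q₁))` is a transition of
`M` from state `p` over the letter `a`. -/
def IsGuidingFun (M B : NPA A) (g : M.Q × (B.Q × A × B.Q × B.Q) → M.Q × A × M.Q × M.Q) :
    Prop :=
  ∀ p δ, (g (p, δ)).1 = p ∧ (g (p, δ)).2.1 = δ.2.1

/-- The run `ρM` is guided by the run `ρB` via `g`: at every position, the transition taken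
by `ρM` is obtained by applying `g` to its own source state and the transition of `ρB`. -/
def GuidedBy (M B : NPA A) (g : M.Q × (B.Q × A × B.Q × B.Q) → M.Q × A × M.Q × M.Q)
    (ρM : Pos → M.Q × A × M.Q × M.Q) (ρB : Pos → B.Q × A × B.Q × B.Q) : Prop :=
  ∀ u, ρM u = g ((ρM u).1, ρB u)

/-- `g` preserves acceptance: any guided run of `M` obtained from an accepting run of `B`
is accepting. -/
def PreservesAcceptance (M B : NPA A)
    (g : M.Q × (B.Q × A × B.Q × B.Q) → M.Q × A × M.Q × M.Q) : Prop :=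
  ∀ (t : Pos → A) ρB ρM, IsRun B t ρB → IsRun M t ρM → GuidedBy M B g ρM ρB →
    AcceptingRun B ρB → AcceptingRun M ρM

/-- The priority seen at step `m` of the path segment from `u` to `u ++ v` in the run `ρ`. -/
def segPrio (M : NPA A) (ρ : Pos → M.Q × A × M.Q × M.Q) (u v : Pos) (m : ℕ) : ℕ :=
  if v.getD m false then (M.Ω (ρ (u ++ v.take m))).2 else (M.Ω (ρ (u ++ v.take m))).1

/-- The greatest priority encountered on the path segment from `u` to `u ++ v`. -/
def segMax (M : NPA A) (ρ : Pos → M.Q × A × M.Q × M.Q) (u v : Pos) : ℕ :=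
  (Finset.range v.length).sup (segPrio M ρ u v)

end NPA

namespace NPA


def red (u v : Pos) : Pos → Pos := fun w =>
  if h : v ≠ [] ∧ (u ++ v) <+: w then
    red u v (u ++ w.drop (u.length + v.length))
  else w
termination_by w => w.length
decreasing_by
  have h1 := h.2.length_le
  have h2 : 0 < v.length := List.length_pos_iff.mpr h.1
  simp only [List.length_append] at h1 ⊢
  simp only [List.length_drop]
  omega

lemma red_eq_self {u v w : Pos} (h : ¬ (u ++ v) <+: w) : red u v w = w := by
  rw [red]; simp [h]

lemma red_eq {u v w : Pos} (hv : v ≠ []) (h : (u ++ v) <+: w) :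
    red u v w = red u v (u ++ w.drop (u.length + v.length)) := by
  rw [red]; simp [hv, h]

lemma red_id {u v x : Pos} (h : ¬ v <+: x) : red u v (u ++ x) = u ++ x := by
  apply red_eq_self
  intro hp
  exact h ((List.prefix_append_right_inj u).mp hp)

lemma red_cons {u v : Pos} (hv : v ≠ []) (x : Pos) :
    red u v (u ++ (v ++ x)) = red u v (u ++ x) := by
  have hp : (u ++ v) <+: (u ++ (v ++ x)) := by
    rw [← List.append_assoc]; exact List.prefix_append _ _
  rw [red_eq hv hp]
  congr 1
  rw [← List.append_assoc]
  have : u.length + v.length = (u ++ v).length := by simp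
  rw [this, List.drop_left]

def vpow (v : Pos) : ℕ → Pos
  | 0 => []
  | k + 1 => v ++ vpow v k

lemma length_vpow (v : Pos) (k : ℕ) : (vpow v k).length = k * v.length := by
  induction k with
  | zero => simp [vpow]
  | succ k ih => simp [vpow, ih]; ring

lemma vpow_succ' (v : Pos) (k : ℕ) : vpow v (k + 1) = vpow v k ++ v := by
  induction k with
  | zero => simp [vpow]
  | succ k ih =>
    have h : v ++ vpow v k = vpow v k ++ v := by
      rw [show vpow v (k+1) = v ++ vpow v k from rfl] at ih; exact ih
    rw [show vpow v (k+1+1) = v ++ vpow v (k+1) from rfl, ih, ← List.append_assoc, h]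

lemma red_vpow {u v : Pos} (hv : v ≠ []) (k : ℕ) (x : Pos) :
    red u v (u ++ (vpow v k ++ x)) = red u v (u ++ x) := by
  induction k with
  | zero => simp [vpow]
  | succ k ih =>
    rw [show vpow v (k+1) = v ++ vpow v k from rfl, List.append_assoc, red_cons hv, ih]

lemma vpow_getD {v : Pos} (hv0 : 0 < v.length) {k d : ℕ} (hd : d < k * v.length) :
    (vpow v k).getD d false = v.getD (d % v.length) false := by
  induction k generalizing d with
  | zero => omega
  | succ k ih =>
    rw [show vpow v (k+1) = v ++ vpow v k from rfl]
    by_cases hdv : d < v.length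
    · rw [List.getD_append _ _ _ _ hdv, Nat.mod_eq_of_lt hdv]
    · push_neg at hdv
      rw [List.getD_append_right _ _ _ _ hdv, ih (by
        have : (k+1) * v.length = k * v.length + v.length := by ring
        omega), ← Nat.mod_eq_sub_mod hdv]

lemma length_pre (β : ℕ → Bool) (m : ℕ) : (pre β m).length = m := by simp [pre]

lemma pre_getD (β : ℕ → Bool) {i m : ℕ} (h : i < m) : (pre β m).getD i false = β i := by
  rw [List.getD_eq_getElem _ _ (by simpa [length_pre] using h)]
  simp [pre]

lemma pre_take (β : ℕ → Bool) {m n : ℕ} (h : m ≤ n) : (pre β n).take m = pre β m := by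
  simp [pre, ← List.map_take, List.take_range, Nat.min_eq_left h]

lemma pre_prefix_mono (β : ℕ → Bool) {a b : ℕ} (h : a ≤ b) : pre β a <+: pre β b := by
  rw [← pre_take β h]; exact List.take_prefix _ _

lemma pre_prefix_eq {β : ℕ → Bool} {x : Pos} {m : ℕ} (h : x <+: pre β m) :
    pre β x.length = x := by
  have hlen : x.length ≤ m := by
    have := h.length_le; rwa [length_pre] at this
  rw [← pre_take β hlen]
  exact (List.prefix_iff_eq_take.mp h).symm

lemma red_step {u v : Pos} (hv : v ≠ []) (w : Pos) (b : Bool) :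
    red u v (w ++ [b]) = red u v w ++ [b] ∨
    (red u v w ++ [b] = u ++ v ∧ red u v (w ++ [b]) = u) := by
  by_cases h1 : (u ++ v) <+: w
  · have h1' : (u ++ v) <+: (w ++ [b]) := h1.trans (List.prefix_append w [b])
    have hle : u.length + v.length ≤ w.length := by
      have := h1.length_le; simpa using this
    rw [red_eq hv h1', red_eq hv h1,
      List.drop_append_of_le_length hle, ← List.append_assoc]
    exact red_step hv (u ++ w.drop (u.length + v.length)) b
  · by_cases h2 : (u ++ v) <+: (w ++ [b])
    · have hlt : ¬ (u ++ v).length ≤ w.length := by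
        intro hle
        exact h1 (List.prefix_of_prefix_length_le h2 (List.prefix_append w [b]) (by simpa using hle))
      have hlen : (u ++ v).length = (w ++ [b]).length := by
        have h2l := h2.length_le
        simp only [List.length_append, List.length_cons, List.length_nil] at h2l hlt ⊢
        omega
      have hw : w ++ [b] = u ++ v := (h2.eq_of_length hlen).symm
      right
      constructor
      · rw [red_eq_self h1]; exact hw
      · rw [red_eq hv h2, hw]
        have : (u ++ v).drop (u.length + v.length) = [] := by
          rw [show u.length + v.length = (u ++ v).length by simp, List.drop_length]
        rw [this, List.append_nil]
        apply red_eq_self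
        intro hp
        have hpl := hp.length_le
        have hv0 : 0 < v.length := List.length_pos_iff.mpr hv
        simp only [List.length_append] at hpl
        omega
    · left; rw [red_eq_self h1, red_eq_self h2]
termination_by w.length
decreasing_by
  have h := h1.length_le
  have hv0 : 0 < v.length := List.length_pos_iff.mpr hv
  simp only [List.length_append, List.length_drop] at h ⊢
  omega


lemma ParityAccepting.of_shift {c d : ℕ → ℕ} (s N : ℕ) (h : ∀ n ≥ N, d (n + s) = c n)
    (hc : ParityAccepting c) : ParityAccepting d := by
  obtain ⟨p, hp, hf, he⟩ := hc
  rw [Filter.frequently_atTop] at hf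
  rw [Filter.eventually_atTop] at he
  obtain ⟨N', hN'⟩ := he
  refine ⟨p, hp, Filter.frequently_atTop.mpr fun a => ?_,
    Filter.eventually_atTop.mpr ⟨max N N' + s, fun m hm => ?_⟩⟩
  · obtain ⟨n, hn, hcn⟩ := hf (max a N)
    exact ⟨n + s, by omega, by rw [h n (by omega), hcn]⟩
  · have h1 : m - s ≥ N := by omega
    have h2 : m - s ≥ N' := by omega
    have hd : d ((m - s) + s) = c (m - s) := h _ h1
    rw [show m = (m - s) + s by omega, hd]
    exact hN' _ h2

lemma parity_periodic_mk {c f : ℕ → ℕ} {L n : ℕ} (hn : 0 < n)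
    (h : ∀ m ≥ L, c m = f ((m - L) % n)) (he : Even ((Finset.range n).sup f)) :
    ParityAccepting c := by
  obtain ⟨j, hj, hjs⟩ := Finset.exists_mem_eq_sup (Finset.range n)
    ⟨0, Finset.mem_range.mpr hn⟩ f
  rw [Finset.mem_range] at hj
  refine ⟨_, he, Filter.frequently_atTop.mpr fun a => ?_,
    Filter.eventually_atTop.mpr ⟨L, fun m hm => ?_⟩⟩
  · refine ⟨L + a * n + j, ?_, ?_⟩
    · have := Nat.le_mul_of_pos_right a hn; omega
    · rw [h _ (by omega),
        show L + a * n + j - L = j + a * n by omega,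
        Nat.add_mul_mod_self_right, Nat.mod_eq_of_lt hj, hjs]
  · rw [h _ hm]
    exact Finset.le_sup (Finset.mem_range.mpr (Nat.mod_lt _ hn))

lemma parity_periodic_elim {c f : ℕ → ℕ} {L n : ℕ} (hn : 0 < n)
    (h : ∀ m ≥ L, c m = f ((m - L) % n)) (hc : ParityAccepting c) :
    Even ((Finset.range n).sup f) := by
  obtain ⟨p, hp, hf, he⟩ := hc
  rw [Filter.frequently_atTop] at hf
  rw [Filter.eventually_atTop] at he
  obtain ⟨N, hN⟩ := he
  have h1 : (Finset.range n).sup f ≤ p := by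
    apply Finset.sup_le
    intro j hj
    rw [Finset.mem_range] at hj
    have hm : L + N * n + j ≥ N := by have := Nat.le_mul_of_pos_right N hn; omega
    have hle := hN _ hm
    rw [h _ (by omega), show L + N * n + j - L = j + N * n by omega,
      Nat.add_mul_mod_self_right, Nat.mod_eq_of_lt hj] at hle
    exact hle
  have h2 : p ≤ (Finset.range n).sup f := by
    obtain ⟨m, hm, hcm⟩ := hf (max L N)
    rw [h _ (le_trans (le_max_left _ _) hm)] at hcm
    rw [← hcm]
    exact Finset.le_sup (Finset.mem_range.mpr (Nat.mod_lt _ hn))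
  rwa [le_antisymm h1 h2]

lemma isRun_red {A : Type} (M : NPA A) (t : Pos → A) (ρ : Pos → M.Q × A × M.Q × M.Q)
    (h : IsRun M t ρ) (u v : Pos) (hv : v ≠ []) (huv : ρ u = ρ (u ++ v)) :
    IsRun M (fun w => t (red u v w)) (fun w => ρ (red u v w)) := by
  obtain ⟨h1, h2, h3, h4⟩ := h
  have hnil : red u v ([] : Pos) = [] := by
    apply red_eq_self
    intro hp
    rw [List.prefix_nil] at hp
    exact hv (List.append_eq_nil_iff.mp hp).2
  refine ⟨fun w => h1 _, fun w => h2 _, by simp only [hnil]; exact h3, ?_⟩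
  intro w b
  rcases red_step hv w b with hc | ⟨hc1, hc2⟩
  · show (ρ (red u v (w ++ [b]))).1 =
      if b = true then (ρ (red u v w)).2.2.2 else (ρ (red u v w)).2.2.1
    rw [hc]
    exact h4 _ b
  · show (ρ (red u v (w ++ [b]))).1 =
      if b = true then (ρ (red u v w)).2.2.2 else (ρ (red u v w)).2.2.1
    rw [hc2]
    calc (ρ u).1 = (ρ (u ++ v)).1 := by rw [huv]
      _ = (ρ (red u v w ++ [b])).1 := by rw [hc1]
      _ = _ := h4 _ b

lemma branch_eval {A : Type} (M : NPA A) (ρ : Pos → M.Q × A × M.Q × M.Q) (u v : Pos)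
    (hv : v ≠ []) (β : ℕ → Bool)
    (hβ : ∀ k, pre β (u.length + k * v.length) = u ++ vpow v k)
    (m : ℕ) (hm : m ≥ u.length) :
    branchPrio M (fun w => ρ (red u v w)) β m = segPrio M ρ u v ((m - u.length) % v.length) := by
  have hv0 : 0 < v.length := List.length_pos_iff.mpr hv
  set j := (m - u.length) % v.length with hj
  set k := (m - u.length) / v.length with hk
  have hjv : j < v.length := Nat.mod_lt _ hv0
  have hm' : m = u.length + k * v.length + j := by
    have hdm := Nat.div_add_mod (m - u.length) v.length
    rw [← hk, ← hj] at hdm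
    have hcomm : v.length * k = k * v.length := Nat.mul_comm _ _
    omega
  have hexp : (k + 1) * v.length = k * v.length + v.length := by ring
  have hlen1 : m ≤ u.length + (k + 1) * v.length := by omega
  have hL : (u ++ vpow v k).length = u.length + k * v.length := by
    simp [length_vpow]
  have hpre : pre β m = (u ++ vpow v k) ++ List.take j v := by
    have h1 : (pre β (u.length + (k + 1) * v.length)).take m = pre β m := pre_take β hlen1
    rw [hβ (k + 1), vpow_succ', ← List.append_assoc] at h1
    rw [← h1, show m = (u ++ vpow v k).length + j by rw [hL]; omega, List.take_length_add_append]
  have hβm : β m = v.getD j false := by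
    have h2 : (pre β (u.length + (k + 1) * v.length)).getD m false = β m :=
      pre_getD β (by omega)
    rw [hβ (k + 1), vpow_succ', ← List.append_assoc] at h2
    rw [← h2, List.getD_append_right _ _ _ _ (by rw [hL]; omega), hL,
      show m - (u.length + k * v.length) = j by omega]
  have hnp : ¬ v <+: List.take j v := by
    intro hp
    have := hp.length_le
    rw [List.length_take] at this
    omega
  have hred : red u v (pre β m) = u ++ List.take j v := by
    rw [hpre, List.append_assoc, red_vpow hv, red_id hnp]
  simp only [branchPrio, segPrio, hβm, hred]

/-- The branch `u · v^ω`. -/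
def pbranch (u v : Pos) : ℕ → Bool := fun m =>
  if m < u.length then u.getD m false else v.getD ((m - u.length) % v.length) false

lemma pre_pbranch {u v : Pos} (hv0 : 0 < v.length) (k : ℕ) :
    pre (pbranch u v) (u.length + k * v.length) = u ++ vpow v k := by
  apply List.ext_getElem
  · simp [length_pre, length_vpow]
  · intro i h1 h2
    rw [length_pre] at h1
    have hpg : (pre (pbranch u v) (u.length + k * v.length))[i] = pbranch u v i := by
      rw [← List.getD_eq_getElem _ false, pre_getD _ h1]
    rw [hpg]
    by_cases hiu : i < u.length
    · rw [List.getElem_append_left hiu, pbranch, if_pos hiu,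
        List.getD_eq_getElem _ _ hiu]
    · push_neg at hiu
      rw [List.getElem_append_right hiu, pbranch, if_neg (not_lt.mpr hiu),
        ← List.getD_eq_getElem (vpow v k) false, vpow_getD hv0 (by
          have h2' : i < u.length + k * v.length := by simpa [length_vpow] using h2
          omega)]

lemma accepting_red {A : Type} (B : NPA A) (t : Pos → A)
    (ρB : Pos → B.Q × A × B.Q × B.Q) (haccB : AcceptingRun B ρB)
    (u v : Pos) (hv : v ≠ []) (heven : Even (segMax B ρB u v)) :
    AcceptingRun B (fun w => ρB (red u v w)) := by
  intro β
  have hv0 : 0 < v.length := List.length_pos_iff.mpr hv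
  by_cases hA : ∀ k, pre β (u.length + k * v.length) = u ++ vpow v k
  · exact parity_periodic_mk hv0 (fun m hm => branch_eval B ρB u v hv β hA m hm) heven
  · push_neg at hA
    by_cases h0 : pre β u.length = u
    · -- there is a largest k with u·v^k a prefix of β
      have hmono : ∀ k, pre β (u.length + (k + 1) * v.length) = u ++ vpow v (k + 1) →
          pre β (u.length + k * v.length) = u ++ vpow v k := by
        intro k hk
        have hp : u ++ vpow v k <+: pre β (u.length + (k + 1) * v.length) := by
          rw [hk, vpow_succ', ← List.append_assoc]
          exact List.prefix_append _ _
        have := pre_prefix_eq hp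
        rwa [List.length_append, length_vpow] at this
      have hex : ∃ k, ¬ pre β (u.length + k * v.length) = u ++ vpow v k := hA
      have hKspec := Nat.find_spec hex
      have hK0 : 0 < Nat.find hex := by
        rcases Nat.eq_zero_or_pos (Nat.find hex) with h | h
        · exfalso
          apply hKspec
          rw [h]
          simpa [vpow] using h0
        · exact h
      set K' := Nat.find hex - 1 with hK'
      have hKP : pre β (u.length + K' * v.length) = u ++ vpow v K' :=
        not_not.mp (Nat.find_min hex (by omega))
      have hKN : ¬ pre β (u.length + (K' + 1) * v.length) = u ++ vpow v (K' + 1) := by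
        rw [show K' + 1 = Nat.find hex by omega]
        exact hKspec
      set β' : ℕ → Bool := fun i =>
        if i < u.length then u.getD i false else β (i + K' * v.length) with hβ'
      have key : ∀ n ≥ u.length + v.length,
          branchPrio B (fun w => ρB (red u v w)) β (n + K' * v.length) =
            branchPrio B ρB β' n := by
        intro n hn
        set m := n + K' * v.length with hmdef
        have hpp : u ++ vpow v K' <+: pre β m := by
          rw [← hKP]
          apply pre_prefix_mono
          omega
        set r := (pre β m).drop (u.length + K' * v.length) with hr
        have hsplit : pre β m = (u ++ vpow v K') ++ r := by
          have ht : (pre β m).take (u.length + K' * v.length) = u ++ vpow v K' := by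
            rw [pre_take β (by omega : u.length + K' * v.length ≤ m)]
            exact hKP
          rw [← List.take_append_drop (u.length + K' * v.length) (pre β m), ht]
        have hexp : (K' + 1) * v.length = K' * v.length + v.length := by ring
        have hnv : ¬ v <+: r := by
          intro hvr
          apply hKN
          have hpref : u ++ vpow v (K' + 1) <+: pre β m := by
            rw [vpow_succ', ← List.append_assoc, hsplit]
            exact (List.prefix_append_right_inj (u ++ vpow v K')).mpr hvr
          have h3 := pre_prefix_eq hpref
          rwa [List.length_append, length_vpow] at h3
        have hred : red u v (pre β m) = u ++ r := by
          rw [hsplit, List.append_assoc, red_vpow hv, red_id hnv]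
        have hrlen : r.length = n - u.length := by
          rw [hr, List.length_drop, length_pre]
          omega
        have hur : u ++ r = pre β' n := by
          apply List.ext_getElem
          · rw [List.length_append, hrlen, length_pre]
            omega
          · intro i hi1 hi2
            rw [length_pre] at hi2
            have hpg : (pre β' n)[i] = β' i := by
              rw [← List.getD_eq_getElem _ false, pre_getD _ hi2]
            rw [hpg]
            by_cases hiu : i < u.length
            · rw [List.getElem_append_left hiu, hβ']
              simp only [if_pos hiu]
              rw [List.getD_eq_getElem _ _ hiu]
            · push_neg at hiu
              rw [List.getElem_append_right hiu]
              have hrg : r[i - u.length]'(by rw [hrlen]; omega) =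
                  β (u.length + K' * v.length + (i - u.length)) := by
                simp only [hr, List.getElem_drop]
                rw [← List.getD_eq_getElem _ false, pre_getD _ (by omega)]
              rw [hrg, hβ']
              simp only [if_neg (not_lt.mpr hiu)]
              congr 1
              omega
        have hβeq : β m = β' n := by
          rw [hβ']
          have hnl : ¬ n < u.length := by omega
          simp only [if_neg hnl]
          rfl
        simp only [branchPrio, hred, hur, hβeq]
      exact ParityAccepting.of_shift (K' * v.length) (u.length + v.length) key (haccB β')
    · -- u is never a prefix: red is the identity along β
      have hred : ∀ m, red u v (pre β m) = pre β m := by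
        intro m
        apply red_eq_self
        intro hp
        exact h0 (pre_prefix_eq ((List.prefix_append u v).trans hp))
      have key : ∀ n ≥ 0, branchPrio B (fun w => ρB (red u v w)) β (n + 0) =
          branchPrio B ρB β n := by
        intro n _
        simp only [branchPrio, hred, Nat.add_zero]
      exact ParityAccepting.of_shift 0 0 key (haccB β)

end NPA

open NPA in
/-- pumping: let ρ_A, ρ_B be accepting runs of A and B on t, with ρ_A guided
by ρ_B via an acceptance-preserving guiding function g.  If u, v (v nonempty) satisfy
ρ_A(u) = ρ_A(u·v) and ρ_B(u) = ρ_B(u·v), and the greatest priority of ρ_B on the segment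
from u to u·v is even, then so is the greatest priority of ρ_A on that segment. -/
theorem pumping {Alph : Type} (A B : NPA Alph) (t : NPA.Pos → Alph)
    (ρA : NPA.Pos → A.Q × Alph × A.Q × A.Q) (ρB : NPA.Pos → B.Q × Alph × B.Q × B.Q)
    (hrunA : IsRun A t ρA) (hrunB : IsRun B t ρB)
    (haccA : AcceptingRun A ρA) (haccB : AcceptingRun B ρB)
    (g : A.Q × (B.Q × Alph × B.Q × B.Q) → A.Q × Alph × A.Q × A.Q)
    (hg : IsGuidingFun A B g) (hpres : PreservesAcceptance A B g)
    (hguided : GuidedBy A B g ρA ρB)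
    (u v : NPA.Pos) (hv : v ≠ [])
    (hAu : ρA u = ρA (u ++ v)) (hBu : ρB u = ρB (u ++ v))
    (heven : Even (segMax B ρB u v)) :
    Even (segMax A ρA u v) := by
  have hv0 : 0 < v.length := List.length_pos_iff.mpr hv
  have hrunA' := isRun_red A t ρA hrunA u v hv hAu
  have hrunB' := isRun_red B t ρB hrunB u v hv hBu
  have hguided' : GuidedBy A B g (fun w => ρA (NPA.red u v w)) (fun w => ρB (NPA.red u v w)) :=
    fun w => hguided (NPA.red u v w)
  have haccB' := accepting_red B t ρB haccB u v hv heven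
  have haccA' := hpres _ _ _ hrunB' hrunA' hguided' haccB'
  have hβ₀ : ∀ k, NPA.pre (NPA.pbranch u v) (u.length + k * v.length) = u ++ NPA.vpow v k :=
    fun k => pre_pbranch hv0 k
  have heval := fun m hm => branch_eval A ρA u v hv (NPA.pbranch u v) hβ₀ m hm
  exact parity_periodic_elim hv0 heval (haccA' (NPA.pbranch u v))
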